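/- arXiv:2103.11364 — 3 statements merged into one kernel-verified Lean document; each statement's English description precedes it below -/
import Mathlib

section
/- Arrow's Impossibility Theorem: if there are at least three candidates, any social welfare function (mapping profiles of linear orders to a linear order) that satisfies unanimity and independence of irrelevant alternatives is a dictatorship. -/
/-- A strict linear order on `C`, represented as a relation together with a
proof that it is a strict total order. -/
def SLO (C : Type*) := {r : C → C → Prop // IsStrictTotalOrder C r}

namespace ArrowAux
variable {C : Type*}

theorem rtrans (r : SLO C) {x y z : C} (h1 : r.1 x y) (h2 : r.1 y z) : r.1 x z := by
  haveI := r.2; exact _root_.trans_of r.1 h1 h2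

theorem rirrefl (r : SLO C) (x : C) : ¬ r.1 x x := by
  haveI := r.2; exact _root_.irrefl_of r.1 x

theorem rtrich (r : SLO C) (x y : C) : r.1 x y ∨ x = y ∨ r.1 y x := by
  haveI := r.2; exact _root_.trichotomous_of r.1 x y

theorem rasymm (r : SLO C) {x y : C} (h1 : r.1 x y) : ¬ r.1 y x :=
  fun h2 => rirrefl r x (rtrans r h1 h2)

theorem rtotal (r : SLO C) {x y : C} (hne : x ≠ y) (h : ¬ r.1 x y) : r.1 y x := by
  rcases rtrich r x y with h1 | h1 | h1
  · exact absurd h1 h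
  · exact absurd h1 hne
  · exact h1

theorem SLO.ext {r s : SLO C} (h : ∀ x y, r.1 x y ↔ s.1 x y) : r = s :=
  Subtype.ext (funext fun x => funext fun y => propext (h x y))

/-- move `b` to the top of `r` -/
def mkTop (b : C) (r : C → C → Prop) : C → C → Prop :=
  fun x y => (x = b ∧ y ≠ b) ∨ (x ≠ b ∧ y ≠ b ∧ r x y)

/-- move `b` to the bottom of `r` -/
def mkBot (b : C) (r : C → C → Prop) : C → C → Prop :=
  fun x y => (x ≠ b ∧ y = b) ∨ (x ≠ b ∧ y ≠ b ∧ r x y)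

theorem mkTop_sto (b : C) {r : C → C → Prop} (h : IsStrictTotalOrder C r) :
    IsStrictTotalOrder C (mkTop b r) := by
  refine { trichotomous := ?_, irrefl := ?_, trans := ?_ }
  · intro x y; refine fun hxy hyx => ((?_ : mkTop b r x y ∨ x = y ∨ mkTop b r y x).resolve_left hxy).resolve_right hyx
    by_cases hx : x = b
    · by_cases hy : y = b
      · right; left; rw [hx, hy]
      · left; exact Or.inl ⟨hx, hy⟩
    · by_cases hy : y = b
      · right; right; exact Or.inl ⟨hy, hx⟩
      · rcases (haveI := h; trichotomous_of r x y) with h1 | h1 | h1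
        · left; exact Or.inr ⟨hx, hy, h1⟩
        · right; left; exact h1
        · right; right; exact Or.inr ⟨hy, hx, h1⟩
  · intro x hx
    rcases hx with ⟨h1, h2⟩ | ⟨h1, _, h3⟩
    · exact h2 h1
    · exact h.irrefl x h3
  · intro x y z hxy hyz
    rcases hxy with ⟨h1, h2⟩ | ⟨h1, h2, h3⟩
    · rcases hyz with ⟨h4, h5⟩ | ⟨h4, h5, h6⟩
      · exact absurd h4 (by simpa using h2)
      · exact Or.inl ⟨h1, h5⟩
    · rcases hyz with ⟨h4, h5⟩ | ⟨h4, h5, h6⟩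
      · exact absurd h4 (by simpa using h2)
      · exact Or.inr ⟨h1, h5, h.trans _ _ _ h3 h6⟩

theorem mkBot_sto (b : C) {r : C → C → Prop} (h : IsStrictTotalOrder C r) :
    IsStrictTotalOrder C (mkBot b r) := by
  refine { trichotomous := ?_, irrefl := ?_, trans := ?_ }
  · intro x y; refine fun hxy hyx => ((?_ : mkBot b r x y ∨ x = y ∨ mkBot b r y x).resolve_left hxy).resolve_right hyx
    by_cases hx : x = b
    · by_cases hy : y = b
      · right; left; rw [hx, hy]
      · right; right; exact Or.inl ⟨hy, hx⟩
    · by_cases hy : y = b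
      · left; exact Or.inl ⟨hx, hy⟩
      · rcases (haveI := h; trichotomous_of r x y) with h1 | h1 | h1
        · left; exact Or.inr ⟨hx, hy, h1⟩
        · right; left; exact h1
        · right; right; exact Or.inr ⟨hy, hx, h1⟩
  · intro x hx
    rcases hx with ⟨h1, h2⟩ | ⟨h1, _, h3⟩
    · exact h1 h2
    · exact h.irrefl x h3
  · intro x y z hxy hyz
    rcases hxy with ⟨h1, h2⟩ | ⟨h1, h2, h3⟩
    · rcases hyz with ⟨h4, h5⟩ | ⟨h4, h5, h6⟩
      · exact absurd h2 (by simpa using h4)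
      · exact absurd h2 (by simpa using h4)
    · rcases hyz with ⟨h4, h5⟩ | ⟨h4, h5, h6⟩
      · exact Or.inl ⟨h1, h5⟩
      · exact Or.inr ⟨h1, h5, h.trans _ _ _ h3 h6⟩

def topS (b : C) (r : SLO C) : SLO C := ⟨mkTop b r.1, mkTop_sto b r.2⟩
def botS (b : C) (r : SLO C) : SLO C := ⟨mkBot b r.1, mkBot_sto b r.2⟩

theorem topS_above (b : C) (r : SLO C) {x : C} (hx : x ≠ b) : (topS b r).1 b x :=
  Or.inl ⟨rfl, hx⟩

theorem botS_below (b : C) (r : SLO C) {x : C} (hx : x ≠ b) : (botS b r).1 x b :=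
  Or.inl ⟨hx, rfl⟩

theorem topS_pres (b : C) (r : SLO C) {x y : C} (hx : x ≠ b) (hy : y ≠ b) :
    (topS b r).1 x y ↔ r.1 x y := by
  constructor
  · rintro (⟨h1, _⟩ | ⟨_, _, h⟩); · exact absurd h1 hx
    exact h
  · intro h; exact Or.inr ⟨hx, hy, h⟩

theorem botS_pres (b : C) (r : SLO C) {x y : C} (hx : x ≠ b) (hy : y ≠ b) :
    (botS b r).1 x y ↔ r.1 x y := by
  constructor
  · rintro (⟨_, h2⟩ | ⟨_, _, h⟩); · exact absurd h2 hy
    exact h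
  · intro h; exact Or.inr ⟨hx, hy, h⟩

/-- a base strict total order on any fintype -/
noncomputable def baseSLO (C : Type*) [Fintype C] : SLO C := by
  classical
  exact ⟨fun x y => (Fintype.equivFin C x : ℕ) < Fintype.equivFin C y, by
    refine { trichotomous := ?_, irrefl := ?_, trans := ?_ }
    · intro x y; refine fun hxy hyx => ((?_ : (Fintype.equivFin C x : ℕ) < Fintype.equivFin C y ∨ x = y ∨ (Fintype.equivFin C y : ℕ) < Fintype.equivFin C x).resolve_left hxy).resolve_right hyx
      rcases lt_trichotomy (Fintype.equivFin C x : ℕ) (Fintype.equivFin C y) with h | h | h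
      · exact Or.inl h
      · exact Or.inr (Or.inl ((Fintype.equivFin C).injective (Fin.ext h)))
      · exact Or.inr (Or.inr h)
    · intro x; exact lt_irrefl _
    · intro x y z; exact lt_trans⟩

theorem exists_third {C : Type*} [Fintype C] (hC : 3 ≤ Fintype.card C) (x y : C) :
    ∃ a : C, a ≠ x ∧ a ≠ y := by
  classical
  by_contra h
  push_neg at h
  have hsub : (Finset.univ : Finset C) ⊆ {x, y} := by
    intro a _
    rcases Classical.em (a = x) with h1 | h1
    · simp [h1]
    · simp [h a h1]
  have := Finset.card_le_card hsub
  have h2 : ({x, y} : Finset C).card ≤ 2 := Finset.card_insert_le _ _ |>.trans (by simp)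
  have h3 : (Finset.univ : Finset C).card = Fintype.card C := Finset.card_univ
  omega

end ArrowAux

namespace ArrowAux
variable {V C : Type*} [Fintype V] [Fintype C]

theorem extremal (F : (V → SLO C) → SLO C)
    (unanimity : ∀ (R : V → SLO C) (x y : C), (∀ i, (R i).1 x y) → (F R).1 x y)
    (iia : ∀ (R R' : V → SLO C) (x y : C),
      (∀ i, ((R i).1 x y ↔ (R' i).1 x y)) → ((F R).1 x y ↔ (F R').1 x y))
    (b : C) (R : V → SLO C)
    (hext : ∀ i, (∀ c, c ≠ b → (R i).1 b c) ∨ (∀ c, c ≠ b → (R i).1 c b)) :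
    (∀ c, c ≠ b → (F R).1 b c) ∨ (∀ c, c ≠ b → (F R).1 c b) := by
  classical
  by_contra hcon
  push_neg at hcon
  obtain ⟨⟨a, ha, hba⟩, ⟨c, hc, hcb⟩⟩ := hcon
  have hFab : (F R).1 a b := rtotal (F R) (Ne.symm ha) hba
  have hFbc : (F R).1 b c := rtotal (F R) hc hcb
  have hac : a ≠ c := by
    rintro rfl
    exact rasymm (F R) hFab hFbc
  -- construct R' : everybody ranks c above a, keeps b-vs-a and b-vs-c
  set R' : V → SLO C := fun i =>
    if (∀ d, d ≠ b → (R i).1 b d) then topS b (topS c (R i)) else botS b (topS c (R i)) with hR'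
  have hax : ∀ i, (R' i).1 c a := by
    intro i
    by_cases hi : (∀ d, d ≠ b → (R i).1 b d)
    · simp only [hR', if_pos hi]
      exact (topS_pres b _ hc ha).2 (topS_above c (R i) hac)
    · simp only [hR', if_neg hi]
      exact (botS_pres b _ hc ha).2 (topS_above c (R i) hac)
  have key : ∀ (x : C), x ≠ b → ∀ i, ((R i).1 x b ↔ (R' i).1 x b) ∧ ((R i).1 b x ↔ (R' i).1 b x) := by
    intro x hx i
    by_cases hi : (∀ d, d ≠ b → (R i).1 b d)
    · have h1 : (R i).1 b x := hi x hx
      have h2 : (R' i).1 b x := by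
        simp only [hR', if_pos hi]; exact topS_above b _ hx
      exact ⟨iff_of_false (rasymm (R i) h1) (rasymm (R' i) h2),
        iff_of_true h1 h2⟩
    · have h1 : (R i).1 x b := by
        rcases hext i with h | h
        · exact absurd h hi
        · exact h x hx
      have h2 : (R' i).1 x b := by
        simp only [hR', if_neg hi]; exact botS_below b _ hx
      exact ⟨iff_of_true h1 h2, iff_of_false (rasymm (R i) h1) (rasymm (R' i) h2)⟩
  have hFab' : (F R').1 a b := (iia R R' a b (fun i => (key a ha i).1)).1 hFab
  have hFbc' : (F R').1 b c := (iia R R' b c (fun i => (key c hc i).2)).1 hFbc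
  have : (F R').1 a c := rtrans (F R') hFab' hFbc'
  exact rasymm (F R') (unanimity R' c a hax) this


theorem pivotal (hC : 3 ≤ Fintype.card C) (F : (V → SLO C) → SLO C)
    (unanimity : ∀ (R : V → SLO C) (x y : C), (∀ i, (R i).1 x y) → (F R).1 x y)
    (iia : ∀ (R R' : V → SLO C) (x y : C),
      (∀ i, ((R i).1 x y ↔ (R' i).1 x y)) → ((F R).1 x y ↔ (F R').1 x y))
    (b : C) :
    ∃ n : V,
      (∀ (R : V → SLO C) (x y : C), x ≠ b → y ≠ b → (R n).1 x y → (F R).1 x y) ∧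
      ∃ P P' : V → SLO C, (∀ j, j ≠ n → P j = P' j) ∧
        (∀ c, c ≠ b → (F P).1 c b) ∧ (∀ c, c ≠ b → (F P').1 b c) := by
  classical
  set nV := Fintype.card V with hnV
  set e := Fintype.equivFin V with he
  set r0 := baseSLO C with hr0
  set prof : ℕ → V → SLO C :=
    fun k i => if (e i : ℕ) < k then topS b r0 else botS b r0 with hprof
  have hextk : ∀ k i, (∀ c, c ≠ b → (prof k i).1 b c) ∨ (∀ c, c ≠ b → (prof k i).1 c b) := by
    intro k i
    by_cases h : (e i : ℕ) < k
    · left; intro c hc; simp only [hprof, if_pos h]; exact topS_above b r0 hc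
    · right; intro c hc; simp only [hprof, if_neg h]; exact botS_below b r0 hc
  set D : ℕ → Prop := fun k => ∀ c, c ≠ b → (F (prof k)).1 b c with hD
  have hD0 : ¬ D 0 := by
    intro h
    obtain ⟨c, hcb, -⟩ := exists_third hC b b
    have h1 : (F (prof 0)).1 c b := by
      apply unanimity
      intro i
      simp only [hprof, if_neg (by omega : ¬ (e i : ℕ) < 0)]
      exact botS_below b r0 hcb
    exact rasymm (F (prof 0)) (h c hcb) h1
  have hDtop : ∀ k, nV ≤ k → D k := by
    intro k hk c hcb
    apply unanimity
    intro i
    have : (e i : ℕ) < k := lt_of_lt_of_le (e i).2 hk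
    simp only [hprof, if_pos this]
    exact topS_above b r0 hcb
  have hex : ∃ k, ¬ D k ∧ D (k + 1) := by
    by_contra h
    push_neg at h
    have hall : ∀ k, ¬ D k := by
      intro k
      induction k with
      | zero => exact hD0
      | succ m ih => exact h m ih
    exact hall nV (hDtop nV le_rfl)
  obtain ⟨k, hk1, hk2⟩ := hex
  have hklt : k < nV := by
    by_contra h
    exact hk1 (hDtop k (by omega))
  set n : V := e.symm ⟨k, hklt⟩ with hn
  have hen : (e n : ℕ) = k := by simp [hn]
  have hbot : ∀ c, c ≠ b → (F (prof k)).1 c b := by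
    rcases extremal F unanimity iia b (prof k) (hextk k) with h | h
    · exact absurd h hk1
    · exact h
  refine ⟨n, ?_, prof k, prof (k + 1), ?_, hbot, hk2⟩
  · -- local dictator on pairs avoiding b
    intro R x y hx hy hxy
    have hxyne : x ≠ y := fun h => rirrefl (R n) x (h ▸ hxy)
    set Q : V → SLO C := fun i =>
      if (e i : ℕ) < k then topS b (R i)
      else if i = n then topS x (topS b (R i)) else botS b (R i) with hQ
    have hQxb : (F Q).1 x b := by
      have := iia Q (prof k) x b ?_
      · exact this.mpr (hbot x hx)
      · intro i
        by_cases hik : (e i : ℕ) < k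
        · simp only [hQ, hprof, if_pos hik]
          exact iff_of_false (rasymm _ (topS_above b (R i) hx)) (rasymm _ (topS_above b r0 hx))
        · by_cases hin : i = n
          · subst hin
            simp only [hQ, hprof, if_neg hik, if_pos rfl]
            exact iff_of_true (topS_above x _ (Ne.symm hx)) (botS_below b r0 hx)
          · simp only [hQ, hprof, if_neg hik, if_neg hin]
            exact iff_of_true (botS_below b (R i) hx) (botS_below b r0 hx)
    have hQby : (F Q).1 b y := by
      have := iia Q (prof (k + 1)) b y ?_
      · exact this.mpr (hk2 y hy)
      · intro i
        by_cases hik : (e i : ℕ) < k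
        · simp only [hQ, hprof, if_pos hik, if_pos (by omega : (e i : ℕ) < k + 1)]
          exact iff_of_true (topS_above b (R i) hy) (topS_above b r0 hy)
        · by_cases hin : i = n
          · subst hin
            have hik1 : (e n : ℕ) < k + 1 := by rw [hen]; omega
            simp only [hQ, hprof, if_neg hik, if_pos rfl, if_pos hik1]
            refine iff_of_true ?_ (topS_above b r0 hy)
            exact (topS_pres x _ (Ne.symm hx) (Ne.symm hxyne)).2 (topS_above b (R n) hy)
          · have hik1 : ¬ (e i : ℕ) < k + 1 := by
              have : (e i : ℕ) ≠ k := by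
                intro h
                exact hin (by
                  have : e i = (⟨k, hklt⟩ : Fin nV) := Fin.ext h
                  rw [hn, ← this, Equiv.symm_apply_apply])
              omega
            simp only [hQ, hprof, if_neg hik, if_neg hin, if_neg hik1]
            exact iff_of_false (rasymm _ (botS_below b (R i) hy)) (rasymm _ (botS_below b r0 hy))
    have hQxy : (F Q).1 x y := rtrans (F Q) hQxb hQby
    refine (iia R Q x y ?_).2 hQxy
    intro i
    by_cases hik : (e i : ℕ) < k
    · simp only [hQ, if_pos hik]
      exact (topS_pres b (R i) hx hy).symm
    · by_cases hin : i = n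
      · subst hin
        simp only [hQ, if_neg hik, if_pos rfl]
        exact iff_of_true hxy (topS_above x _ (Ne.symm hxyne))
      · simp only [hQ, if_neg hik, if_neg hin]
        exact (botS_pres b (R i) hx hy).symm
  · -- prof k and prof (k+1) differ only at n
    intro j hj
    have hjk : (e j : ℕ) ≠ k := by
      intro h
      exact hj (by
        have : e j = (⟨k, hklt⟩ : Fin nV) := Fin.ext h
        rw [hn, ← this, Equiv.symm_apply_apply])
    by_cases h : (e j : ℕ) < k
    · simp only [hprof, if_pos h, if_pos (by omega : (e j : ℕ) < k + 1)]
    · simp only [hprof, if_neg h, if_neg (by omega : ¬ (e j : ℕ) < k + 1)]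

end ArrowAux

/-- Arrow's Impossibility Theorem: any social welfare function on at least three
candidates satisfying unanimity and IIA is a dictatorship. -/
theorem arrows_impossibility {V C : Type*} [Fintype V] [Fintype C]
    (hV : 2 ≤ Fintype.card V) (hC : 3 ≤ Fintype.card C)
    (F : (V → SLO C) → SLO C)
    (unanimity : ∀ (R : V → SLO C) (x y : C), (∀ i, (R i).1 x y) → (F R).1 x y)
    (iia : ∀ (R R' : V → SLO C) (x y : C),
      (∀ i, ((R i).1 x y ↔ (R' i).1 x y)) → ((F R).1 x y ↔ (F R').1 x y)) :
    ∃ i : V, ∀ R : V → SLO C, F R = R i := by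
  classical
  open ArrowAux in
  have hCne : Nonempty C := Fintype.card_pos_iff.mp (by omega)
  obtain ⟨b⟩ := hCne
  obtain ⟨n, hdict, P, P', hPP', hFP, hFP'⟩ := ArrowAux.pivotal hC F unanimity iia b
  have dictAll : ∀ (R : V → SLO C) (x y : C), (R n).1 x y → (F R).1 x y := by
    intro R x y hxy
    have hxyne : x ≠ y := fun h => ArrowAux.rirrefl (R n) x (h ▸ hxy)
    by_cases hb : x ≠ b ∧ y ≠ b
    · exact hdict R x y hb.1 hb.2 hxy
    · have hbxy : b = x ∨ b = y := by
        by_contra h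
        push_neg at h
        exact hb ⟨Ne.symm h.1, Ne.symm h.2⟩
      obtain ⟨a, hax, hay⟩ := ArrowAux.exists_third hC x y
      have hab : b ≠ a := by
        rcases hbxy with h | h
        · rw [← h] at hax; exact Ne.symm hax
        · rw [← h] at hay; exact Ne.symm hay
      obtain ⟨m, hmdict, Q, Q', hQQ', hFQ, hFQ'⟩ := ArrowAux.pivotal hC F unanimity iia a
      have hmn : m = n := by
        by_contra hmn
        obtain ⟨d, hdb, hda⟩ := ArrowAux.exists_third hC b a
        have h1 : (F P).1 d b := hFP d hdb
        have h2 : (F P').1 b d := hFP' d hdb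
        rcases ArrowAux.rtrich (P m) d b with h3 | h3 | h3
        · have h4 : (P' m).1 d b := by rw [← hPP' m hmn]; exact h3
          exact ArrowAux.rasymm (F P') h2 (hmdict P' d b hda hab h4)
        · exact hdb h3
        · exact ArrowAux.rasymm (F P) h1 (hmdict P b d hab hda h3)
      rw [hmn] at hmdict
      exact hmdict R x y (Ne.symm hax) (Ne.symm hay) hxy
  refine ⟨n, fun R => ArrowAux.SLO.ext fun x y => ⟨?_, dictAll R x y⟩⟩
  intro h
  rcases ArrowAux.rtrich (R n) x y with h1 | h1 | h1
  · exact h1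
  · exact absurd (h1 ▸ h) (ArrowAux.rirrefl (F R) y)
  · exact absurd h (ArrowAux.rasymm (F R) (dictAll R y x h1))
end

section
/- Quantum Condorcet Voting violates sharp dictatorship on the Condorcet cycle: for the profile ρ₁ ⊗ ρ₂ ⊗ ρ₃ with ρ₁ = |x≻y≻z⟩⟨x≻y≻z|, ρ₂ = |y≻z≻x⟩⟨y≻z≻x|, ρ₃ = |z≻x≻y⟩⟨z≻x≻y|, whose output is the uniform mixture σ over all six linear orders, for each voter i there is a pair (a,b) with Tr(Π^{a≻b} ρᵢ) = 1 but Tr(Π^{a≻b} σ) < 1. -/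
lemma tr_diag_std {n : Type*} [Fintype n] [DecidableEq n] (d : n → ℂ) (R : n) :
    (Matrix.diagonal d * Matrix.single R R (1:ℂ)).trace = d R := by
  simp [Matrix.trace, Matrix.diag, Matrix.diagonal_mul, Matrix.single]

lemma qcv_key {C : Type*} [Fintype C] [DecidableEq C]
    (hcard : Fintype.card C = 3) (a b : C)
    (Q0 : C ≃ Fin (Fintype.card C)) (hQ0 : ¬ Q0 a < Q0 b) :
    ((Matrix.diagonal (fun Q : C ≃ Fin (Fintype.card C) => if Q a < Q b then (1:ℂ) else 0)
      * ((1 / 6 : ℂ) • ∑ R : C ≃ Fin (Fintype.card C),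
        Matrix.single R R (1 : ℂ))).trace).re < 1 := by
  have hc : Fintype.card (C ≃ Fin (Fintype.card C)) = 6 := by
    rw [Fintype.card_equiv (Fintype.equivFin C), hcard]; rfl
  rw [Matrix.mul_smul, Matrix.trace_smul, Matrix.mul_sum, Matrix.trace_sum]
  simp only [tr_diag_std]
  have hre : ((1 / 6 : ℂ) • ∑ R : C ≃ Fin (Fintype.card C),
      (if R a < R b then (1:ℂ) else 0)).re
      = (1/6 : ℝ) * ∑ R : C ≃ Fin (Fintype.card C), (if R a < R b then (1:ℝ) else 0) := by
    rw [smul_eq_mul]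
    push_cast
    simp [Complex.re_sum, apply_ite Complex.re]
  rw [hre]
  have hlt : ∑ R : C ≃ Fin (Fintype.card C), (if R a < R b then (1:ℝ) else 0)
      < ∑ _R : C ≃ Fin (Fintype.card C), (1:ℝ) := by
    apply Finset.sum_lt_sum
    · intro i _; split <;> norm_num
    · exact ⟨Q0, Finset.mem_univ _, by simp [hQ0]⟩
  have h6 : ∑ _R : C ≃ Fin (Fintype.card C), (1:ℝ) = 6 := by
    simp [Finset.sum_const, hc]
  linarith

/-- Quantum Condorcet Voting violates sharp dictatorship on the Condorcet
cycle: for the basis profile x≻y≻z, y≻z≻x, z≻x≻y whose output is the uniform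
mixture σ over all six linear orders, each voter has a pair `(a,b)` with
`Tr(Π^{a≻b}ρᵢ) = 1` but `Tr(Π^{a≻b}σ) < 1`. -/
theorem qcv_violates_sharp_dictatorship {C : Type*} [Fintype C] [DecidableEq C]
    (hcard : Fintype.card C = 3) (x y z : C)
    (hxy : x ≠ y) (hyz : y ≠ z) (hxz : x ≠ z)
    (R1 R2 R3 : C ≃ Fin (Fintype.card C))
    (h1 : R1 x < R1 y ∧ R1 y < R1 z)
    (h2 : R2 y < R2 z ∧ R2 z < R2 x)
    (h3 : R3 z < R3 x ∧ R3 x < R3 y) :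
    let proj : C → C → Matrix (C ≃ Fin (Fintype.card C)) (C ≃ Fin (Fintype.card C)) ℂ :=
      fun a b => Matrix.diagonal fun Q => if Q a < Q b then (1 : ℂ) else 0
    let σ : Matrix (C ≃ Fin (Fintype.card C)) (C ≃ Fin (Fintype.card C)) ℂ :=
      (1 / 6 : ℂ) • ∑ R : C ≃ Fin (Fintype.card C), Matrix.single R R (1 : ℂ)
    (∃ a b : C, (proj a b * Matrix.single R1 R1 (1 : ℂ)).trace = 1 ∧
        (proj a b * σ).trace.re < 1) ∧
    (∃ a b : C, (proj a b * Matrix.single R2 R2 (1 : ℂ)).trace = 1 ∧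
        (proj a b * σ).trace.re < 1) ∧
    (∃ a b : C, (proj a b * Matrix.single R3 R3 (1 : ℂ)).trace = 1 ∧
        (proj a b * σ).trace.re < 1) := by
  intro proj σ
  refine ⟨⟨x, y, ?_, qcv_key hcard x y R2 (by omega)⟩,
    ⟨y, z, ?_, qcv_key hcard y z R3 (by omega)⟩,
    ⟨z, x, ?_, qcv_key hcard z x R1 (by omega)⟩⟩
  · rw [show proj x y = Matrix.diagonal fun Q => if Q x < Q y then (1:ℂ) else 0 from rfl,
      tr_diag_std]; simp [h1.1]
  · rw [show proj y z = Matrix.diagonal fun Q => if Q y < Q z then (1:ℂ) else 0 from rfl,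
      tr_diag_std]; simp [h2.1]
  · rw [show proj z x = Matrix.diagonal fun Q => if Q z < Q x then (1:ℂ) else 0 from rfl,
      tr_diag_std]; simp [h3.1]
end

section
/- Quantum Condorcet Voting violates unsharp dictatorship on the Condorcet cycle: with the same profile and output σ as above, for each voter i there is a pair (a,b) with Tr(Π^{a≻b} σ) > 0 but Tr(Π^{a≻b} ρᵢ) = 0. -/
lemma trace_diag_std {n : Type*} [Fintype n] [DecidableEq n]
    (d : n → ℂ) (R : n) :
    (Matrix.diagonal d * Matrix.single R R (1 : ℂ)).trace = d R := by
  simp only [Matrix.trace, Matrix.mul_apply, Matrix.diagonal, Matrix.single,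
    Matrix.diag, Matrix.of_apply, mul_ite, mul_one, mul_zero]
  rw [Finset.sum_comm]
  rw [Finset.sum_eq_single R, Finset.sum_eq_single R] <;> simp +contextual [eq_comm]

lemma trace_sigma {n : Type*} [Fintype n] [DecidableEq n]
    (d : n → ℂ) :
    (Matrix.diagonal d * ((1/6 : ℂ) • ∑ R : n, Matrix.single R R (1 : ℂ))).trace
      = (1/6 : ℂ) * ∑ R : n, d R := by
  rw [Matrix.mul_smul, Matrix.mul_sum, Matrix.trace_smul, Matrix.trace_sum]
  simp [trace_diag_std, smul_eq_mul]

lemma sigma_pos {n : Type*} [Fintype n] [DecidableEq n]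
    (p : n → Prop) [DecidablePred p] (R0 : n) (h : p R0) :
    0 < ((Matrix.diagonal (fun Q => if p Q then (1:ℂ) else 0) *
      ((1/6 : ℂ) • ∑ R : n, Matrix.single R R (1 : ℂ))).trace).re := by
  rw [trace_sigma]
  have heq : (∑ R : n, if p R then (1:ℂ) else 0)
      = ((Finset.univ.filter p).card : ℂ) := by
    simp [Finset.sum_boole]
  rw [heq]
  have hpos : 0 < (Finset.univ.filter p).card :=
    Finset.card_pos.mpr ⟨R0, by simp [h]⟩
  have : (0:ℝ) < ((Finset.univ.filter p).card : ℝ) := by exact_mod_cast hpos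
  have hre : ((1/6 : ℂ) * ((Finset.univ.filter p).card : ℂ)).re
      = (1/6 : ℝ) * ((Finset.univ.filter p).card : ℝ) := by
    simp [Complex.mul_re]
  rw [hre]
  positivity

/-- Quantum Condorcet Voting violates unsharp dictatorship on the Condorcet
cycle: with the same profile and output σ, each voter has a pair `(a,b)` with
`Tr(Π^{a≻b}σ) > 0` but `Tr(Π^{a≻b}ρᵢ) = 0`. -/
theorem qcv_violates_unsharp_dictatorship {C : Type*} [Fintype C] [DecidableEq C]
    (hcard : Fintype.card C = 3) (x y z : C)
    (hxy : x ≠ y) (hyz : y ≠ z) (hxz : x ≠ z)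
    (R1 R2 R3 : C ≃ Fin (Fintype.card C))
    (h1 : R1 x < R1 y ∧ R1 y < R1 z)
    (h2 : R2 y < R2 z ∧ R2 z < R2 x)
    (h3 : R3 z < R3 x ∧ R3 x < R3 y) :
    let proj : C → C → Matrix (C ≃ Fin (Fintype.card C)) (C ≃ Fin (Fintype.card C)) ℂ :=
      fun a b => Matrix.diagonal fun Q => if Q a < Q b then (1 : ℂ) else 0
    let σ : Matrix (C ≃ Fin (Fintype.card C)) (C ≃ Fin (Fintype.card C)) ℂ :=
      (1 / 6 : ℂ) • ∑ R : C ≃ Fin (Fintype.card C), Matrix.single R R (1 : ℂ)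
    (∃ a b : C, 0 < (proj a b * σ).trace.re ∧
        (proj a b * Matrix.single R1 R1 (1 : ℂ)).trace = 0) ∧
    (∃ a b : C, 0 < (proj a b * σ).trace.re ∧
        (proj a b * Matrix.single R2 R2 (1 : ℂ)).trace = 0) ∧
    (∃ a b : C, 0 < (proj a b * σ).trace.re ∧
        (proj a b * Matrix.single R3 R3 (1 : ℂ)).trace = 0) := by
  intro proj σ
  refine ⟨⟨z, x, ?_, ?_⟩, ⟨x, y, ?_, ?_⟩, ⟨y, z, ?_, ?_⟩⟩
  · exact sigma_pos (fun (Q : C ≃ Fin (Fintype.card C)) => Q z < Q x) R2 h2.2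
  · rw [show proj z x = Matrix.diagonal fun (Q : C ≃ Fin (Fintype.card C)) =>
        if Q z < Q x then (1:ℂ) else 0 from rfl, trace_diag_std]
    exact if_neg (not_lt.mpr (le_of_lt (h1.1.trans h1.2)))
  · exact sigma_pos (fun (Q : C ≃ Fin (Fintype.card C)) => Q x < Q y) R1 h1.1
  · rw [show proj x y = Matrix.diagonal fun (Q : C ≃ Fin (Fintype.card C)) =>
        if Q x < Q y then (1:ℂ) else 0 from rfl, trace_diag_std]
    exact if_neg (not_lt.mpr (le_of_lt (h2.1.trans h2.2)))
  · exact sigma_pos (fun (Q : C ≃ Fin (Fintype.card C)) => Q y < Q z) R1 h1.2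
  · rw [show proj y z = Matrix.diagonal fun (Q : C ≃ Fin (Fintype.card C)) =>
        if Q y < Q z then (1:ℂ) else 0 from rfl, trace_diag_std]
    exact if_neg (not_lt.mpr (le_of_lt (h3.1.trans h3.2)))
end
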